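/- Let H₁ and H₂ be finite simple graphs on disjoint vertex sets and let H₁ * H₂ be their join. Then cd₂(H₁ * H₂) = min( cd₂(H₁) + v(H₂), τ(H₁) + τ(H₂), v(H₁) + cd₂(H₂) ). -/

import Mathlib

open SimpleGraph

/-- A vertex cover: a set of vertices meeting every edge. -/
def IsVertexCover {V : Type*} (H : SimpleGraph V) (S : Set V) : Prop :=
  ∀ ⦃u v⦄, H.Adj u v → u ∈ S ∨ v ∈ S

/-- The vertex cover number. -/
noncomputable def tauN {V : Type*} (H : SimpleGraph V) : ℕ :=
  sInf {n | ∃ S : Set V, _root_.IsVertexCover H S ∧ S.ncard = n}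

/-- The 2-colorability defect: the minimum number of vertices whose removal
leaves a bipartite (i.e. 2-colorable) induced subgraph. -/
noncomputable def cd2 {V : Type*} (H : SimpleGraph V) : ℕ :=
  sInf {n | ∃ X : Set V, X.ncard = n ∧ (H.induce Xᶜ).Colorable 2}

/-- The join of two graphs on disjoint vertex sets: their disjoint union together with
all edges between a vertex of the first and a vertex of the second. -/
def gJoin {V₁ V₂ : Type*} (H₁ : SimpleGraph V₁) (H₂ : SimpleGraph V₂) :
    SimpleGraph (V₁ ⊕ V₂) where
  Adj x y :=
    match x, y with
    | .inl a, .inl b => H₁.Adj a b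
    | .inl _, .inr _ => True
    | .inr _, .inl _ => True
    | .inr a, .inr b => H₂.Adj a b
  symm := by
    refine ⟨?_⟩
    rintro (a | a) (b | b) h
    · exact h.symm
    · trivial
    · trivial
    · exact h.symm
  loopless := by
    refine ⟨?_⟩
    rintro (a | a) h
    · exact H₁.irrefl h
    · exact H₂.irrefl h


section Aux
variable {V V₁ V₂ : Type*}

lemma fin2_lemma : ∀ x y z : Fin 2, x ≠ y → x ≠ z → y = z := by decide

lemma ncard_sum_set [Fintype V₁] [Fintype V₂] (X : Set (V₁ ⊕ V₂)) :
    X.ncard = (Sum.inl ⁻¹' X).ncard + (Sum.inr ⁻¹' X).ncard := by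
  have hX : X = Sum.inl '' (Sum.inl ⁻¹' X) ∪ Sum.inr '' (Sum.inr ⁻¹' X) := by
    ext (a | b) <;> simp
  have hdisj : Disjoint (Sum.inl '' (Sum.inl ⁻¹' X)) (Sum.inr '' (Sum.inr ⁻¹' X)) := by
    rw [Set.disjoint_left]
    rintro x ⟨a, _, rfl⟩ ⟨b, _, h⟩
    exact Sum.inl_ne_inr h.symm
  conv_lhs => rw [hX]
  rw [Set.ncard_union_eq hdisj (Set.toFinite _) (Set.toFinite _),
    Set.ncard_image_of_injective _ Sum.inl_injective,
    Set.ncard_image_of_injective _ Sum.inr_injective]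

lemma transfer_left (H₁ : SimpleGraph V₁) (H₂ : SimpleGraph V₂) (X : Set (V₁ ⊕ V₂))
    (h : ((gJoin H₁ H₂).induce Xᶜ).Colorable 2) :
    (H₁.induce (Sum.inl ⁻¹' X)ᶜ).Colorable 2 := by
  obtain ⟨c⟩ := h
  exact ⟨Coloring.mk (fun a => c ⟨Sum.inl a.1, a.2⟩) (fun {a b} hab => c.valid hab)⟩

lemma transfer_right (H₁ : SimpleGraph V₁) (H₂ : SimpleGraph V₂) (X : Set (V₁ ⊕ V₂))
    (h : ((gJoin H₁ H₂).induce Xᶜ).Colorable 2) :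
    (H₂.induce (Sum.inr ⁻¹' X)ᶜ).Colorable 2 := by
  obtain ⟨c⟩ := h
  exact ⟨Coloring.mk (fun a => c ⟨Sum.inr a.1, a.2⟩) (fun {a b} hab => c.valid hab)⟩

lemma cd2_le {H : SimpleGraph V} {X : Set V} (h : (H.induce Xᶜ).Colorable 2) :
    cd2 H ≤ X.ncard := Nat.sInf_le ⟨X, rfl, h⟩

lemma tauN_le {H : SimpleGraph V} {S : Set V} (h : _root_.IsVertexCover H S) :
    tauN H ≤ S.ncard := Nat.sInf_le ⟨S, h, rfl⟩

lemma cd2_exists (H : SimpleGraph V) :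
    ∃ X : Set V, X.ncard = cd2 H ∧ (H.induce Xᶜ).Colorable 2 := by
  have hne : {n | ∃ X : Set V, X.ncard = n ∧ (H.induce Xᶜ).Colorable 2}.Nonempty := by
    refine ⟨(Set.univ : Set V).ncard, Set.univ, rfl, ?_⟩
    have : IsEmpty ((Set.univ : Set V)ᶜ : Set V) := by
      rw [Set.compl_univ]; exact Set.isEmpty_coe_sort.mpr rfl
    exact Colorable.of_isEmpty (G := H.induce _) 2
  exact Nat.sInf_mem hne

lemma tauN_exists (H : SimpleGraph V) :
    ∃ S : Set V, _root_.IsVertexCover H S ∧ S.ncard = tauN H := by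
  have hne : {n | ∃ S : Set V, _root_.IsVertexCover H S ∧ S.ncard = n}.Nonempty :=
    ⟨(Set.univ : Set V).ncard, Set.univ, fun u v _ => Or.inl trivial, rfl⟩
  exact Nat.sInf_mem hne

end Aux

/-- The 2-colorability defect of the join of two graphs. -/
theorem cd2_gJoin {V₁ V₂ : Type*} [Fintype V₁] [Fintype V₂]
    (H₁ : SimpleGraph V₁) (H₂ : SimpleGraph V₂) :
    cd2 (gJoin H₁ H₂) =
      min (cd2 H₁ + Fintype.card V₂) (min (tauN H₁ + tauN H₂) (Fintype.card V₁ + cd2 H₂)) := by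
  have hcard_univ₁ : (Set.univ : Set V₁).ncard = Fintype.card V₁ := by
    rw [Set.ncard_univ, Nat.card_eq_fintype_card]
  have hcard_univ₂ : (Set.univ : Set V₂).ncard = Fintype.card V₂ := by
    rw [Set.ncard_univ, Nat.card_eq_fintype_card]
  apply le_antisymm
  · refine le_min ?_ (le_min ?_ ?_)
    · -- remove X₁ ∪ V₂
      obtain ⟨X₁, hX₁card, ⟨c₁⟩⟩ := cd2_exists H₁
      set X : Set (V₁ ⊕ V₂) := Sum.inl '' X₁ ∪ Set.range Sum.inr with hXdef
      have hcol : ((gJoin H₁ H₂).induce Xᶜ).Colorable 2 := by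
        refine ⟨Coloring.mk (fun x => ?_) ?_⟩
        · rcases x with ⟨a | b, h⟩
          · exact c₁ ⟨a, fun ha => h (Or.inl ⟨a, ha, rfl⟩)⟩
          · exact absurd (Or.inr ⟨b, rfl⟩) h
        · rintro ⟨a | b, h⟩ ⟨a' | b', h'⟩ hab
          · exact c₁.valid hab
          · exact absurd (Or.inr ⟨b', rfl⟩) h'
          · exact absurd (Or.inr ⟨b, rfl⟩) h
          · exact absurd (Or.inr ⟨b, rfl⟩) h
      have hle := cd2_le hcol
      have hpre1 : Sum.inl ⁻¹' X = X₁ := by ext a; simp [hXdef]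
      have hpre2 : Sum.inr ⁻¹' X = Set.univ := by ext b; simp [hXdef]
      rwa [ncard_sum_set, hpre1, hpre2, hX₁card, hcard_univ₂] at hle
    · -- remove C₁ ∪ C₂
      obtain ⟨C₁, hC₁, hC₁card⟩ := tauN_exists H₁
      obtain ⟨C₂, hC₂, hC₂card⟩ := tauN_exists H₂
      set X : Set (V₁ ⊕ V₂) := Sum.inl '' C₁ ∪ Sum.inr '' C₂ with hXdef
      have hcol : ((gJoin H₁ H₂).induce Xᶜ).Colorable 2 := by
        refine ⟨Coloring.mk (fun x => ?_) ?_⟩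
        · rcases x with ⟨a | b, _⟩
          exacts [0, 1]
        · rintro ⟨a | b, h⟩ ⟨a' | b', h'⟩ hab
          · rcases hC₁ hab with hc | hc
            · exact absurd (Or.inl ⟨a, hc, rfl⟩) h
            · exact absurd (Or.inl ⟨a', hc, rfl⟩) h'
          · simp
          · simp
          · rcases hC₂ hab with hc | hc
            · exact absurd (Or.inr ⟨b, hc, rfl⟩) h
            · exact absurd (Or.inr ⟨b', hc, rfl⟩) h'
      have hle := cd2_le hcol
      have hpre1 : Sum.inl ⁻¹' X = C₁ := by ext a; simp [hXdef]
      have hpre2 : Sum.inr ⁻¹' X = C₂ := by ext b; simp [hXdef]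
      rwa [ncard_sum_set, hpre1, hpre2, hC₁card, hC₂card] at hle
    · -- remove V₁ ∪ X₂
      obtain ⟨X₂, hX₂card, ⟨c₂⟩⟩ := cd2_exists H₂
      set X : Set (V₁ ⊕ V₂) := Set.range Sum.inl ∪ Sum.inr '' X₂ with hXdef
      have hcol : ((gJoin H₁ H₂).induce Xᶜ).Colorable 2 := by
        refine ⟨Coloring.mk (fun x => ?_) ?_⟩
        · rcases x with ⟨a | b, h⟩
          · exact absurd (Or.inl ⟨a, rfl⟩) h
          · exact c₂ ⟨b, fun hb => h (Or.inr ⟨b, hb, rfl⟩)⟩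
        · rintro ⟨a | b, h⟩ ⟨a' | b', h'⟩ hab
          · exact absurd (Or.inl ⟨a, rfl⟩) h
          · exact absurd (Or.inl ⟨a, rfl⟩) h
          · exact absurd (Or.inl ⟨a', rfl⟩) h'
          · exact c₂.valid hab
      have hle := cd2_le hcol
      have hpre1 : Sum.inl ⁻¹' X = Set.univ := by ext a; simp [hXdef]
      have hpre2 : Sum.inr ⁻¹' X = X₂ := by ext b; simp [hXdef]
      rwa [ncard_sum_set, hpre1, hpre2, hX₂card, hcard_univ₁] at hle
  · obtain ⟨X, hXcard, hXcol⟩ := cd2_exists (gJoin H₁ H₂)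
    rw [← hXcard, ncard_sum_set X]
    by_cases h2 : Sum.inr ⁻¹' X = Set.univ
    · apply min_le_of_left_le
      have h1 := cd2_le (transfer_left H₁ H₂ X hXcol)
      rw [h2, hcard_univ₂]
      exact Nat.add_le_add h1 le_rfl
    by_cases h1 : Sum.inl ⁻¹' X = Set.univ
    · refine le_trans (min_le_right _ _) (le_trans (min_le_right _ _) ?_)
      have h2' := cd2_le (transfer_right H₁ H₂ X hXcol)
      rw [h1, hcard_univ₁]
      exact Nat.add_le_add le_rfl h2'
    · refine le_trans (min_le_right _ _) (le_trans (min_le_left _ _) ?_)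
      obtain ⟨a, ha⟩ := (Set.ne_univ_iff_exists_notMem _).mp h1
      obtain ⟨b, hb⟩ := (Set.ne_univ_iff_exists_notMem _).mp h2
      obtain ⟨c⟩ := hXcol
      have hcov1 : _root_.IsVertexCover H₁ (Sum.inl ⁻¹' X) := by
        intro u v huv
        by_contra hcon
        push_neg at hcon
        have e1 : c ⟨Sum.inl u, hcon.1⟩ ≠ c ⟨Sum.inl v, hcon.2⟩ := c.valid huv
        have e2 : c ⟨Sum.inr b, hb⟩ ≠ c ⟨Sum.inl u, hcon.1⟩ := c.valid trivial
        have e3 : c ⟨Sum.inr b, hb⟩ ≠ c ⟨Sum.inl v, hcon.2⟩ := c.valid trivial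
        exact e1 (fin2_lemma _ _ _ e2 e3)
      have hcov2 : _root_.IsVertexCover H₂ (Sum.inr ⁻¹' X) := by
        intro u v huv
        by_contra hcon
        push_neg at hcon
        have e1 : c ⟨Sum.inr u, hcon.1⟩ ≠ c ⟨Sum.inr v, hcon.2⟩ := c.valid huv
        have e2 : c ⟨Sum.inl a, ha⟩ ≠ c ⟨Sum.inr u, hcon.1⟩ := c.valid trivial
        have e3 : c ⟨Sum.inl a, ha⟩ ≠ c ⟨Sum.inr v, hcon.2⟩ := c.valid trivial
        exact e1 (fin2_lemma _ _ _ e2 e3)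
      exact Nat.add_le_add (tauN_le hcov1) (tauN_le hcov2)
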